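/- Let L be a subsimple finite-dimensional complex Lie algebra, i.e. either dim L = 1 or L has a maximal proper Lie subalgebra that contains no nonzero Lie ideal of L. Then the intersection of all maximal proper Lie subalgebras of L equals {0}; moreover, if dim L ≥ 2, then the centre of L equals {0}. -/

import Mathlib

open NormedSpace

lemma exp_deriv_aut {V : Type*} [NormedAddCommGroup V] [NormedSpace ℂ V] [CompleteSpace V]
    (B : V →L[ℂ] V →L[ℂ] V) (D : V →L[ℂ] V)
    (hD : ∀ a b, D (B a b) = B (D a) b + B a (D b)) (t : ℂ) (a b : V) :
    exp (t • D) (B a b) = B (exp (t • D) a) (exp (t • D) b) := by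
  set f : ℂ → V := fun s => exp ((-s) • D) (B (exp (s • D) a) (exp (s • D) b)) with hf
  have key : ∀ s : ℂ, HasDerivAt f 0 s := by
    intro s
    have ha : HasDerivAt (fun u : ℂ => exp (u • D) a) (D (exp (s • D) a)) s := by
      simpa using (hasDerivAt_exp_smul_const' D s).clm_apply (hasDerivAt_const s a)
    have hb : HasDerivAt (fun u : ℂ => exp (u • D) b) (D (exp (s • D) b)) s := by
      simpa using (hasDerivAt_exp_smul_const' D s).clm_apply (hasDerivAt_const s b)
    have hc : HasDerivAt (fun u : ℂ => B (exp (u • D) a)) (B (D (exp (s • D) a))) s :=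
      B.hasFDerivAt.comp_hasDerivAt s ha
    have hw : HasDerivAt (fun u : ℂ => B (exp (u • D) a) (exp (u • D) b))
        (B (D (exp (s • D) a)) (exp (s • D) b) + B (exp (s • D) a) (D (exp (s • D) b))) s :=
      hc.clm_apply hb
    have hneg : HasDerivAt (fun u : ℂ => exp ((-u) • D))
        ((-1 : ℂ) • (exp ((-s) • D) * D)) s := by
      exact HasDerivAt.scomp s (hasDerivAt_exp_smul_const D (-s)) (hasDerivAt_neg s)
    have := hneg.clm_apply hw
    convert this using 1
    rw [← hD]
    simp [ContinuousLinearMap.smul_apply, ContinuousLinearMap.mul_apply]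
  have hconst : f t = f 0 := by
    refine is_const_of_deriv_eq_zero (fun s => (key s).differentiableAt) (fun s => (key s).deriv) t 0
  have hf0 : f 0 = B a b := by simp [hf, exp_zero]
  have hinv : exp (t • D) * exp ((-t) • D) = 1 := by
    rw [← exp_add_of_commute_of_mem_ball (𝕂 := ℂ) (((Commute.refl D).smul_left t).smul_right (-t)) ((expSeries_radius_eq_top ℂ (V →L[ℂ] V)).symm ▸ edist_lt_top _ _) ((expSeries_radius_eq_top ℂ (V →L[ℂ] V)).symm ▸ edist_lt_top _ _)]
    simp
  have := hconst.trans hf0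
  rw [hf] at this
  have h2 := congrArg (fun v => exp (t • D) v) this
  have h3 : (exp (t • D) * exp ((-t) • D))
      (B (exp (t • D) a) (exp (t • D) b)) = exp (t • D) (B a b) := h2
  rw [hinv] at h3
  simpa using h3.symm

lemma exp_cancel {V : Type*} [NormedAddCommGroup V] [NormedSpace ℂ V] [CompleteSpace V]
    (D : V →L[ℂ] V) (t : ℂ) (v : V) :
    exp (t • D) (exp ((-t) • D) v) = v := by
  have hinv : exp (t • D) * exp ((-t) • D) = 1 := by
    rw [← exp_add_of_commute_of_mem_ball (𝕂 := ℂ) (((Commute.refl D).smul_left t).smul_right (-t)) ((expSeries_radius_eq_top ℂ (V →L[ℂ] V)).symm ▸ edist_lt_top _ _) ((expSeries_radius_eq_top ℂ (V →L[ℂ] V)).symm ▸ edist_lt_top _ _)]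
    simp
  have h3 : (exp (t • D) * exp ((-t) • D)) v = exp (t • D) (exp ((-t) • D) v) := rfl
  rw [hinv] at h3
  simpa using h3.symm

lemma deriv_mem_exp {V : Type*} [NormedAddCommGroup V] [NormedSpace ℂ V] [FiniteDimensional ℂ V]
    (D : V →L[ℂ] V) (S : Submodule ℂ V) (v : V)
    (h : ∀ t : ℂ, exp (t • D) v ∈ S) : D v ∈ S := by
  have hder : HasDerivAt (fun t : ℂ => exp (t • D) v) (D v) 0 := by
    have h := (hasDerivAt_exp_smul_const' D 0).clm_apply (hasDerivAt_const (0 : ℂ) v)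
    simpa [exp_zero] using h
  have hslope := hasDerivAt_iff_tendsto_slope.1 hder
  refine S.closed_of_finiteDimensional.mem_of_tendsto hslope ?_
  filter_upwards [self_mem_nhdsWithin] with t ht
  rw [slope_def_module]
  exact S.smul_mem _ (S.sub_mem (h t) (h 0))

lemma comap_max {R L : Type*} [CommRing R] [LieRing L] [LieAlgebra R L] (σ τ : L →ₗ⁅R⁆ L)
    (hστ : ∀ z, σ (τ z) = z) (hτσ : ∀ z, τ (σ z) = z) (K : LieSubalgebra R L)
    (hKtop : K ≠ ⊤) (hKmax : ∀ N, K < N → N = ⊤) :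
    K.comap σ ≠ ⊤ ∧ ∀ N, K.comap σ < N → N = ⊤ := by
  constructor
  · intro htop
    apply hKtop
    refine eq_top_iff.2 fun w _ => ?_
    have hw : τ w ∈ K.comap σ := by rw [htop]; exact LieSubalgebra.mem_top _
    have : σ (τ w) ∈ K := hw
    rwa [hστ] at this
  · intro N hN
    have hKN' : K < N.map σ := by
      constructor
      · intro w hw
        refine (LieSubalgebra.mem_map _ _ _).2 ⟨τ w, ?_, hστ w⟩
        have : σ (τ w) ∈ K := by rw [hστ]; exact hw
        exact hN.1 this
      · intro hle
        obtain ⟨z, hzN, hzK⟩ := SetLike.exists_of_lt hN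
        have : σ z ∈ N.map σ := (LieSubalgebra.mem_map _ _ _).2 ⟨z, hzN, rfl⟩
        exact hzK (hle this)
    have hN'top := hKmax _ hKN'
    refine eq_top_iff.2 fun w _ => ?_
    have : σ w ∈ N.map σ := by rw [hN'top]; exact LieSubalgebra.mem_top _
    obtain ⟨u, huN, hu⟩ := (LieSubalgebra.mem_map _ _ _).1 this
    have : u = w := by
      have := congrArg τ hu
      rwa [hτσ, hτσ] at this
    rwa [← this]

lemma frattini_mem_sInf {L : Type*} [LieRing L] [LieAlgebra ℂ L]
    (S : Set (LieSubalgebra ℂ L)) (z : L) :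
    z ∈ sInf S ↔ ∀ K ∈ S, z ∈ K := by
  rw [← LieSubalgebra.mem_toSubmodule, LieSubalgebra.sInf_toSubmodule]
  simp only [Submodule.mem_sInf, Set.mem_setOf_eq, forall_exists_index]
  constructor
  · intro h K hK; exact h K.toSubmodule K ⟨hK, rfl⟩
  · rintro h p K ⟨hK, rfl⟩; exact h K hK

lemma frattini_lie_mem {L : Type*} [LieRing L] [LieAlgebra ℂ L] [FiniteDimensional ℂ L]
    (x y : L)
    (hy : y ∈ sInf {M : LieSubalgebra ℂ L | M ≠ ⊤ ∧ ∀ N : LieSubalgebra ℂ L, M < N → N = ⊤}) :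
    ⁅x, y⁆ ∈ sInf {M : LieSubalgebra ℂ L | M ≠ ⊤ ∧ ∀ N : LieSubalgebra ℂ L, M < N → N = ⊤} := by
  classical
  rw [frattini_mem_sInf] at hy ⊢
  obtain ⟨ι, B, D, hB, hDapp⟩ :
      ∃ (ι : L ≃ₗ[ℂ] (Fin (Module.finrank ℂ L) → ℂ))
        (B : (Fin (Module.finrank ℂ L) → ℂ) →L[ℂ] (Fin (Module.finrank ℂ L) → ℂ)
              →L[ℂ] (Fin (Module.finrank ℂ L) → ℂ))
        (D : (Fin (Module.finrank ℂ L) → ℂ) →L[ℂ] (Fin (Module.finrank ℂ L) → ℂ)),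
        (∀ a c, B a c = ι ⁅ι.symm a, ι.symm c⁆) ∧ (∀ a, D a = ι ⁅x, ι.symm a⁆) := by
    set ι0 := (Module.finBasis ℂ L).equivFun with hι0
    refine ⟨ι0, ?_, ?_, ?_, ?_⟩
    · exact LinearMap.toContinuousLinearMap
        ((LinearMap.toContinuousLinearMap :
            ((Fin (Module.finrank ℂ L) → ℂ) →ₗ[ℂ] (Fin (Module.finrank ℂ L) → ℂ))
              ≃ₗ[ℂ] _).toLinearMap
          ∘ₗ (((ι0.conj.toLinearMap ∘ₗ LinearMap.mk₂ ℂ (fun a b : L => ⁅a, b⁆) add_lie smul_lie lie_add lie_smul)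
            ∘ₗ ι0.symm.toLinearMap)))
    · exact LinearMap.toContinuousLinearMap (ι0.conj (LieAlgebra.ad ℂ L x))
    · intro a c
      simp [LinearEquiv.conj_apply, LieAlgebra.ad_apply]
    · intro a
      simp [LinearEquiv.conj_apply, LieAlgebra.ad_apply]
  have hD : ∀ a c, D (B a c) = B (D a) c + B a (D c) := by
    intro a c
    simp only [hB, hDapp]
    rw [← map_add]
    simp only [LinearEquiv.symm_apply_apply]
    congr 1
    exact leibniz_lie x (ι.symm a) (ι.symm c)
  have key := exp_deriv_aut B D hD
  -- the one-parameter family of automorphisms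
  have hσ : ∀ t : ℂ, ∃ σ : L →ₗ⁅ℂ⁆ L, ∀ z, σ z = ι.symm (exp (t • D) (ι z)) := by
    intro t
    refine ⟨{ toLinearMap := ι.symm.toLinearMap ∘ₗ ((exp (t • D)).toLinearMap ∘ₗ ι.toLinearMap)
              map_lie' := ?_ }, fun z => rfl⟩
    intro u v
    have h := key t (ι u) (ι v)
    simp only [hB, LinearEquiv.symm_apply_apply] at h
    show ι.symm (exp (t • D) (ι ⁅u, v⁆))
      = ⁅ι.symm (exp (t • D) (ι u)), ι.symm (exp (t • D) (ι v))⁆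
    rw [h, LinearEquiv.symm_apply_apply]
  choose σ hσapp using hσ
  have hστ : ∀ (t : ℂ) (z : L), σ t (σ (-t) z) = z := by
    intro t z
    rw [hσapp, hσapp, LinearEquiv.apply_symm_apply, exp_cancel, LinearEquiv.symm_apply_apply]
  have hτσ : ∀ (t : ℂ) (z : L), σ (-t) (σ t z) = z := by
    intro t z
    have h := hστ (-t) z
    rwa [neg_neg] at h
  intro K hK
  -- E t (ι y) stays in the image submodule of K
  have hc : ∀ t : ℂ, exp (t • D) (ι y) ∈ K.toSubmodule.map (ι : L →ₗ[ℂ] _) := by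
    intro t
    obtain ⟨hKtop, hKmax⟩ := hK
    have h1 : y ∈ K.comap (σ t) :=
      hy _ (comap_max (σ t) (σ (-t)) (hστ t) (hτσ t) K hKtop hKmax)
    have h2 : σ t y ∈ K := h1
    rw [hσapp] at h2
    exact Submodule.mem_map.2 ⟨ι.symm (exp (t • D) (ι y)), h2, by simp⟩
  have hmem := deriv_mem_exp D _ _ hc
  rw [hDapp, LinearEquiv.symm_apply_apply] at hmem
  obtain ⟨u, huK, hu⟩ := Submodule.mem_map.1 hmem
  have : u = ⁅x, y⁆ := ι.injective hu
  rwa [← this]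

/-- A subsimple finite-dimensional complex Lie algebra is Frattini-free, and has trivial
centre when its dimension is at least 2. -/
theorem stmt_16 {L : Type*} [LieRing L] [LieAlgebra ℂ L] [FiniteDimensional ℂ L]
    (hss : Module.finrank ℂ L = 1 ∨
      ∃ M : LieSubalgebra ℂ L, M ≠ ⊤ ∧ (∀ N : LieSubalgebra ℂ L, M < N → N = ⊤) ∧
        ∀ I : LieIdeal ℂ L, (I : Submodule ℂ L) ≤ M.toSubmodule → I = ⊥) :
    sInf {M : LieSubalgebra ℂ L | M ≠ ⊤ ∧ ∀ N : LieSubalgebra ℂ L, M < N → N = ⊤} = ⊥ ∧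
    (2 ≤ Module.finrank ℂ L → LieAlgebra.center ℂ L = ⊥) := by
  constructor
  · rcases hss with h1 | ⟨M, hMtop, hMmax, hMcore⟩
    · -- dimension one: ⊥ itself is a maximal subalgebra
      have hnt : Nontrivial L := by
        have : 0 < Module.finrank ℂ L := by omega
        exact Module.nontrivial_of_finrank_pos this
      have hbot : (⊥ : LieSubalgebra ℂ L) ∈
          {M : LieSubalgebra ℂ L | M ≠ ⊤ ∧ ∀ N : LieSubalgebra ℂ L, M < N → N = ⊤} := by
        constructor
        · intro h
          obtain ⟨w, hw⟩ := exists_ne (0 : L)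
          have : w ∈ (⊥ : LieSubalgebra ℂ L) := by rw [h]; exact LieSubalgebra.mem_top _
          exact hw ((LieSubalgebra.mem_bot _).1 this)
        · intro N hN
          obtain ⟨w, hwN, hw0⟩ := SetLike.exists_of_lt hN
          rw [LieSubalgebra.mem_bot] at hw0
          have hspan : (ℂ ∙ w) ≤ N.toSubmodule := by
            rw [Submodule.span_singleton_le_iff_mem]; exact hwN
          have h1le : 1 ≤ Module.finrank ℂ N.toSubmodule := by
            have := Submodule.finrank_mono hspan
            rwa [finrank_span_singleton hw0] at this
          have hle1 : Module.finrank ℂ N.toSubmodule ≤ Module.finrank ℂ L :=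
            Submodule.finrank_le _
          have heq : Module.finrank ℂ N.toSubmodule = Module.finrank ℂ L := by omega
          have : N.toSubmodule = ⊤ := Submodule.eq_top_of_finrank_eq heq
          apply LieSubalgebra.toSubmodule_injective
          rw [this, LieSubalgebra.top_toSubmodule]
      refine le_antisymm (sInf_le hbot) bot_le
    · -- subsimple case: the Frattini subalgebra is an ideal contained in M
      set Φ := sInf {M : LieSubalgebra ℂ L | M ≠ ⊤ ∧ ∀ N : LieSubalgebra ℂ L, M < N → N = ⊤}
        with hΦ
      have hΦM : Φ ≤ M := sInf_le ⟨hMtop, hMmax⟩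
      set I : LieIdeal ℂ L :=
        { Φ.toSubmodule with
          lie_mem := fun {x m} hm => frattini_lie_mem x m hm } with hI
      have hIbot : I = ⊥ := by
        refine hMcore I ?_
        intro z hz
        exact hΦM hz
      refine le_antisymm ?_ bot_le
      intro z hz
      have hzI : z ∈ I := hz
      rw [hIbot] at hzI
      rw [LieSubalgebra.mem_bot]
      exact (LieSubmodule.mem_bot _).1 hzI
  · intro h2
    rcases hss with h1 | ⟨M, hMtop, hMmax, hMcore⟩
    · omega
    · by_cases hZM : ((LieAlgebra.center ℂ L : LieIdeal ℂ L) : Submodule ℂ L) ≤ M.toSubmodule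
      · exact hMcore _ hZM
      · exfalso
        rw [SetLike.not_le_iff_exists] at hZM
        obtain ⟨z, hzZ, hzM⟩ := hZM
        have hzc : ∀ w : L, ⁅w, z⁆ = 0 :=
          (LieModule.mem_maxTrivSubmodule ℂ L L z).1 hzZ
        have hz0 : z ≠ 0 := by
          rintro rfl; exact hzM (Submodule.zero_mem _)
        -- span of a central element ∪ M is a subalgebra
        have hzc' : ∀ w : L, ⁅z, w⁆ = 0 := by
          intro w
          have h := hzc w
          rw [← lie_skew, h, neg_zero]
        have hsublie : ∀ {x y : L}, x ∈ M.toSubmodule ⊔ (ℂ ∙ z) → y ∈ M.toSubmodule ⊔ (ℂ ∙ z) →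
            ⁅x, y⁆ ∈ M.toSubmodule ⊔ (ℂ ∙ z) := by
          intro x y hx hy
          obtain ⟨a, ha, w, hw, rfl⟩ := Submodule.mem_sup.1 hx
          obtain ⟨a', ha', w', hw', rfl⟩ := Submodule.mem_sup.1 hy
          obtain ⟨c, rfl⟩ := Submodule.mem_span_singleton.1 hw
          obtain ⟨c', rfl⟩ := Submodule.mem_span_singleton.1 hw'
          have heq : ⁅a + c • z, a' + c' • z⁆ = ⁅a, a'⁆ := by
            simp [lie_add, add_lie, lie_smul, smul_lie, hzc, hzc']
          rw [heq]
          exact Submodule.mem_sup_left (M.lie_mem ha ha')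
        set N : LieSubalgebra ℂ L :=
          { M.toSubmodule ⊔ (ℂ ∙ z) with lie_mem' := hsublie } with hN
        have hzN : z ∈ N := Submodule.mem_sup_right (Submodule.mem_span_singleton_self z)
        have hMN : M < N := by
          constructor
          · intro w hw
            exact Submodule.mem_sup_left hw
          · intro hle
            exact hzM (hle hzN)
        have hNtop := hMmax N hMN
        have hsup : M.toSubmodule ⊔ (ℂ ∙ z) = ⊤ := by
          have h := congrArg LieSubalgebra.toSubmodule hNtop
          rwa [LieSubalgebra.top_toSubmodule] at h
        -- M is then an ideal of L
        have hlieM : ∀ {x m : L}, m ∈ M.toSubmodule → ⁅x, m⁆ ∈ M.toSubmodule := by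
          intro x m hm
          have hx : x ∈ M.toSubmodule ⊔ (ℂ ∙ z) := by rw [hsup]; exact Submodule.mem_top
          obtain ⟨a, ha, w, hw, rfl⟩ := Submodule.mem_sup.1 hx
          obtain ⟨c, rfl⟩ := Submodule.mem_span_singleton.1 hw
          have heq : ⁅a + c • z, m⁆ = ⁅a, m⁆ := by
            simp [add_lie, smul_lie, hzc']
          rw [heq]
          exact M.lie_mem ha hm
        set IM : LieIdeal ℂ L := { M.toSubmodule with lie_mem := fun {x m} hm => hlieM hm }
          with hIM
        have hMbot := hMcore IM le_rfl
        have hM0 : M.toSubmodule = ⊥ := by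
          have h := congrArg (fun J : LieIdeal ℂ L => (J : Submodule ℂ L)) hMbot
          simp only [LieIdeal.toLieSubalgebra_toSubmodule,
            LieSubmodule.bot_toSubmodule] at h
          exact h
        rw [hM0, bot_sup_eq] at hsup
        have : Module.finrank ℂ L = 1 := by
          rw [← finrank_top ℂ L, ← hsup, finrank_span_singleton hz0]
        omega
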